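/- A Galois connection (adjunction) between two finite posets P and Q induces a homotopy equivalence between their order complexes Δ(P) and Δ(Q). -/
import Mathlib


open Finset

/-- Geometric order complex `Δ(P)` of a finite poset. -/
def OC (P : Type) [PartialOrder P] [Fintype P] : Type :=
  {f : P → ℝ // (∀ x, 0 ≤ f x) ∧ (∑ x, f x) = 1 ∧ IsChain (· ≤ ·) {x | f x ≠ 0}}

instance (P : Type) [PartialOrder P] [Fintype P] : TopologicalSpace (OC P) :=
  inferInstanceAs (TopologicalSpace {f : P → ℝ // _})

open scoped Classical

section Push

variable {P Q R : Type} [Fintype P] [Fintype Q]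

/-- Pushforward of a weight function along a map. -/
noncomputable def push (φ : P → Q) (p : P → ℝ) (q : Q) : ℝ :=
  ∑ x, if φ x = q then p x else 0

lemma push_nonneg (φ : P → Q) {p : P → ℝ} (hp : ∀ x, 0 ≤ p x) (q : Q) :
    0 ≤ push φ p q := by
  apply Finset.sum_nonneg
  intro x _
  split_ifs
  · exact hp x
  · exact le_rfl

lemma push_sum (φ : P → Q) (p : P → ℝ) : ∑ q, push φ p q = ∑ x, p x := by
  unfold push
  rw [Finset.sum_comm]
  simp

lemma push_support (φ : P → Q) {p : P → ℝ} {q : Q} (h : push φ p q ≠ 0) :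
    ∃ x, φ x = q ∧ p x ≠ 0 := by
  obtain ⟨x, _, hx⟩ := Finset.exists_ne_zero_of_sum_ne_zero h
  by_cases hc : φ x = q
  · exact ⟨x, hc, by simpa [hc] using hx⟩
  · simp [hc] at hx

lemma push_comp (φ : P → Q) (ψ : Q → R) (p : P → ℝ) :
    push ψ (push φ p) = push (ψ ∘ φ) p := by
  funext r
  unfold push
  calc ∑ q, (if ψ q = r then ∑ x, (if φ x = q then p x else 0) else 0)
      = ∑ q, ∑ x, (if ψ q = r then (if φ x = q then p x else 0) else 0) := by
        refine Finset.sum_congr rfl fun q _ => ?_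
        split_ifs <;> simp
    _ = ∑ x, ∑ q, (if ψ q = r then (if φ x = q then p x else 0) else 0) :=
        Finset.sum_comm
    _ = ∑ x, (if ψ (φ x) = r then p x else 0) := by
        refine Finset.sum_congr rfl fun x _ => ?_
        rw [Finset.sum_eq_single (φ x)]
        · simp
        · intro b _ hb
          simp [Ne.symm hb]
        · simp

lemma push_id [Fintype P] (p : P → ℝ) : push (id : P → P) p = p := by
  funext q
  unfold push
  simp

end Push

section OCmapSec

variable {P Q R : Type} [PartialOrder P] [Fintype P] [PartialOrder Q] [Fintype Q]
  [PartialOrder R] [Fintype R]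

lemma push_chain {φ : P → Q} (hφ : Monotone φ) {p : P → ℝ}
    (hch : IsChain (· ≤ ·) {x | p x ≠ 0}) :
    IsChain (· ≤ ·) {q | push φ p q ≠ 0} := by
  intro q1 hq1 q2 hq2 hne
  obtain ⟨x1, hx1, hp1⟩ := push_support φ hq1
  obtain ⟨x2, hx2, hp2⟩ := push_support φ hq2
  rcases eq_or_ne x1 x2 with rfl | hxne
  · exact absurd (hx1.symm.trans hx2) hne
  · rcases hch hp1 hp2 hxne with hle | hle
    · exact Or.inl (hx1 ▸ hx2 ▸ hφ hle)
    · exact Or.inr (hx2 ▸ hx1 ▸ hφ hle)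

/-- The continuous map on order complexes induced by a monotone map. -/
noncomputable def OCmap (φ : P → Q) (hφ : Monotone φ) : C(OC P, OC Q) where
  toFun p := ⟨push φ p.1, push_nonneg φ p.2.1,
    by rw [push_sum]; exact p.2.2.1, push_chain hφ p.2.2.2⟩
  continuous_toFun := by
    apply Continuous.subtype_mk
    apply continuous_pi
    intro q
    apply continuous_finset_sum
    intro x _
    split_ifs
    · exact (continuous_apply x).comp continuous_subtype_val
    · exact continuous_const

lemma OCmap_comp (φ : P → Q) (ψ : Q → R) (hφ : Monotone φ) (hψ : Monotone ψ) :
    (OCmap ψ hψ).comp (OCmap φ hφ) = OCmap (ψ ∘ φ) (hψ.comp hφ) := by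
  ext p
  exact Subtype.ext (push_comp φ ψ p.1)

lemma OCmap_id : OCmap (id : P → P) monotone_id = ContinuousMap.id (OC P) := by
  ext p
  exact Subtype.ext (push_id p.1)

end OCmapSec

section Homotopy

variable {P Q : Type} [PartialOrder P] [Fintype P] [PartialOrder Q] [Fintype Q]

/-- Sum of weights strictly below `x`. -/
noncomputable def Sl (p : P → ℝ) (x : P) : ℝ := ∑ y ∈ Finset.univ.filter (· < x), p y

/-- Level-0 weight in the prism homotopy. -/
noncomputable def bw (u : ℝ) (p : P → ℝ) (x : P) : ℝ :=
  min (Sl p x + p x) u - min (Sl p x) u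

/-- Level-1 weight in the prism homotopy. -/
noncomputable def cw (u : ℝ) (p : P → ℝ) (x : P) : ℝ := p x - bw u p x

/-- The straight-line prism homotopy formula. -/
noncomputable def hfun (φ ψ : P → Q) (u : ℝ) (p : P → ℝ) (q : Q) : ℝ :=
  push φ (bw u p) q + push ψ (cw u p) q

lemma Sl_nonneg {p : P → ℝ} (hp : ∀ x, 0 ≤ p x) (x : P) : 0 ≤ Sl p x :=
  Finset.sum_nonneg fun y _ => hp y

lemma bw_nonneg {p : P → ℝ} (hp : ∀ x, 0 ≤ p x) (u : ℝ) (x : P) :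
    0 ≤ bw u p x :=
  sub_nonneg.2 (min_le_min (le_add_of_nonneg_right (hp x)) le_rfl)

lemma bw_le {p : P → ℝ} (hp : ∀ x, 0 ≤ p x) (u : ℝ) (x : P) :
    bw u p x ≤ p x := by
  unfold bw
  have := hp x
  simp only [min_def]
  split_ifs <;> linarith

lemma cw_nonneg {p : P → ℝ} (hp : ∀ x, 0 ≤ p x) (u : ℝ) (x : P) :
    0 ≤ cw u p x := sub_nonneg.2 (bw_le hp u x)

lemma bw_zero {p : P → ℝ} {x : P} (h : p x = 0) (u : ℝ) : bw u p x = 0 := by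
  unfold bw
  rw [h, add_zero, sub_self]

lemma bw_ne_zero {p : P → ℝ} {x : P} {u : ℝ} (h : bw u p x ≠ 0) : p x ≠ 0 :=
  fun hp => h (bw_zero hp u)

lemma cw_ne_zero {p : P → ℝ} {x : P} {u : ℝ} (h : cw u p x ≠ 0) : p x ≠ 0 := by
  intro hp
  exact h (by unfold cw; rw [hp, bw_zero hp, sub_self])

lemma Su_le_Sl {p : P → ℝ} (hp : ∀ x, 0 ≤ p x) {x' x : P} (hlt : x' < x) :
    Sl p x' + p x' ≤ Sl p x := by
  unfold Sl
  have hx' : x' ∉ Finset.univ.filter (· < x') := by simp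
  rw [add_comm, ← Finset.sum_insert hx']
  apply Finset.sum_le_sum_of_subset_of_nonneg
  · intro y hy
    simp only [Finset.mem_insert, Finset.mem_filter, Finset.mem_univ, true_and] at hy ⊢
    rcases hy with rfl | hy
    · exact hlt
    · exact hy.trans hlt
  · intro y _ _
    exact hp y

/-- The key incompatibility: level-1 weight strictly below a level-0 weight is impossible. -/
lemma key {p : P → ℝ} (hp : ∀ x, 0 ≤ p x) {x' x : P} (hlt : x' < x) {u : ℝ}
    (hc : cw u p x' ≠ 0) (hb : bw u p x ≠ 0) : False := by
  have h1 : Sl p x < u := by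
    by_contra hcon
    push_neg at hcon
    apply hb
    unfold bw
    rw [min_eq_right hcon, min_eq_right (hcon.trans (le_add_of_nonneg_right (hp x))), sub_self]
  have h2 : u < Sl p x' + p x' := by
    by_contra hcon
    push_neg at hcon
    apply hc
    unfold cw bw
    have hSl : Sl p x' ≤ u := le_trans (le_add_of_nonneg_right (hp x')) hcon
    rw [min_eq_left hcon, min_eq_left hSl]
    ring
  have h3 := Su_le_Sl hp hlt
  linarith

lemma hfun_nonneg (φ ψ : P → Q) {p : P → ℝ} (hp : ∀ x, 0 ≤ p x) (u : ℝ) (q : Q) :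
    0 ≤ hfun φ ψ u p q :=
  add_nonneg (push_nonneg φ (bw_nonneg hp u) q) (push_nonneg ψ (cw_nonneg hp u) q)

lemma hfun_sum (φ ψ : P → Q) (p : P → ℝ) (u : ℝ) :
    ∑ q, hfun φ ψ u p q = ∑ x, p x := by
  unfold hfun
  rw [Finset.sum_add_distrib, push_sum, push_sum, ← Finset.sum_add_distrib]
  refine Finset.sum_congr rfl fun x _ => ?_
  unfold cw
  ring

lemma hfun_support {φ ψ : P → Q} {p : P → ℝ} (hp : ∀ x, 0 ≤ p x) {u : ℝ} {q : Q}
    (h : hfun φ ψ u p q ≠ 0) :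
    (∃ x, φ x = q ∧ bw u p x ≠ 0) ∨ (∃ x, ψ x = q ∧ cw u p x ≠ 0) := by
  unfold hfun at h
  rcases (by by_contra hcon; push_neg at hcon; exact h (by rw [hcon.1, hcon.2, add_zero]) :
      push φ (bw u p) q ≠ 0 ∨ push ψ (cw u p) q ≠ 0) with h' | h'
  · exact Or.inl (push_support φ h')
  · exact Or.inr (push_support ψ h')

lemma hfun_chain {φ ψ : P → Q} (hφ : Monotone φ) (hψ : Monotone ψ) (hle : φ ≤ ψ)
    {p : P → ℝ} (hp : ∀ x, 0 ≤ p x) (hch : IsChain (· ≤ ·) {x | p x ≠ 0}) (u : ℝ) :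
    IsChain (· ≤ ·) {q | hfun φ ψ u p q ≠ 0} := by
  have mixed : ∀ {x1 x2 : P}, bw u p x1 ≠ 0 → cw u p x2 ≠ 0 → φ x1 ≤ ψ x2 := by
    intro x1 x2 hb hc
    rcases eq_or_ne x1 x2 with rfl | hne
    · exact (hφ le_rfl).trans (hle x1)
    · rcases hch (bw_ne_zero hb) (cw_ne_zero hc) hne with hle' | hle'
      · exact (hφ hle').trans (hle x2)
      · exact absurd (key hp (lt_of_le_of_ne hle' hne.symm) hc hb) not_false
  intro q1 hq1 q2 hq2 hne
  rcases hfun_support hp hq1 with ⟨x1, rfl, h1⟩ | ⟨x1, rfl, h1⟩ <;>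
    rcases hfun_support hp hq2 with ⟨x2, rfl, h2⟩ | ⟨x2, rfl, h2⟩
  · rcases eq_or_ne x1 x2 with rfl | hxne
    · exact absurd rfl hne
    · rcases hch (bw_ne_zero h1) (bw_ne_zero h2) hxne with hle' | hle'
      · exact Or.inl (hφ hle')
      · exact Or.inr (hφ hle')
  · exact Or.inl (mixed h1 h2)
  · exact Or.inr (mixed h2 h1)
  · rcases eq_or_ne x1 x2 with rfl | hxne
    · exact absurd rfl hne
    · rcases hch (cw_ne_zero h1) (cw_ne_zero h2) hxne with hle' | hle'
      · exact Or.inl (hψ hle')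
      · exact Or.inr (hψ hle')

lemma Su_le_one {p : P → ℝ} (hp : ∀ x, 0 ≤ p x) (hs : ∑ x, p x = 1) (x : P) :
    Sl p x + p x ≤ 1 := by
  rw [← hs]
  unfold Sl
  have hx : x ∉ Finset.univ.filter (· < x) := by simp
  rw [add_comm, ← Finset.sum_insert hx]
  apply Finset.sum_le_sum_of_subset_of_nonneg
  · intro y _; simp
  · intro y _ _; exact hp y

lemma hfun_one (φ ψ : P → Q) {p : P → ℝ} (hp : ∀ x, 0 ≤ p x) (hs : ∑ x, p x = 1) :
    hfun φ ψ 1 p = push φ p := by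
  funext q
  unfold hfun
  have hb : bw 1 p = p := by
    funext x
    unfold bw
    rw [min_eq_left (Su_le_one hp hs x),
      min_eq_left (le_trans (le_add_of_nonneg_right (hp x)) (Su_le_one hp hs x))]
    ring
  have hc : cw 1 p = fun _ => 0 := by
    funext x
    unfold cw
    rw [hb]
    ring
  rw [hb, hc]
  have : push ψ (fun _ => (0:ℝ)) q = 0 := by unfold push; simp
  rw [this, add_zero]

lemma hfun_zero (φ ψ : P → Q) {p : P → ℝ} (hp : ∀ x, 0 ≤ p x) :
    hfun φ ψ 0 p = push ψ p := by
  funext q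
  unfold hfun
  have hb : bw 0 p = fun _ => 0 := by
    funext x
    unfold bw
    rw [min_eq_right (Sl_nonneg hp x),
      min_eq_right (add_nonneg (Sl_nonneg hp x) (hp x))]
    ring
  have hc : cw 0 p = p := by
    funext x
    unfold cw
    rw [hb]
    ring
  rw [hb, hc]
  have : push φ (fun _ => (0:ℝ)) q = 0 := by unfold push; simp
  rw [this, zero_add]

/-- The prism homotopy between the maps induced by pointwise-comparable monotone maps. -/
noncomputable def OChomotopy {φ ψ : P → Q} (hφ : Monotone φ) (hψ : Monotone ψ)
    (hle : φ ≤ ψ) : ContinuousMap.Homotopy (OCmap φ hφ) (OCmap ψ hψ) where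
  toFun tp := ⟨hfun φ ψ (1 - (tp.1 : ℝ)) tp.2.1,
    hfun_nonneg φ ψ tp.2.2.1 _,
    by rw [hfun_sum]; exact tp.2.2.2.1,
    hfun_chain hφ hψ hle tp.2.2.1 tp.2.2.2.2 _⟩
  continuous_toFun := by
    have hu : Continuous fun tp : ↑unitInterval × OC P => (1 - (tp.1 : ℝ)) :=
      continuous_const.sub (continuous_subtype_val.comp continuous_fst)
    have hy : ∀ y : P, Continuous fun tp : ↑unitInterval × OC P => (tp.2 : OC P).1 y :=
      fun y => (continuous_apply y).comp (continuous_subtype_val.comp continuous_snd)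
    have hSl : ∀ x : P, Continuous fun tp : ↑unitInterval × OC P => Sl tp.2.1 x :=
      fun x => continuous_finset_sum _ fun y _ => hy y
    have hbw : ∀ x : P,
        Continuous fun tp : ↑unitInterval × OC P => bw (1 - (tp.1 : ℝ)) tp.2.1 x :=
      fun x => (((hSl x).add (hy x)).min hu).sub ((hSl x).min hu)
    have hcw : ∀ x : P,
        Continuous fun tp : ↑unitInterval × OC P => cw (1 - (tp.1 : ℝ)) tp.2.1 x :=
      fun x => (hy x).sub (hbw x)
    apply Continuous.subtype_mk
    apply continuous_pi
    intro q
    apply Continuous.add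
    · apply continuous_finset_sum
      intro x _
      split_ifs
      · exact hbw x
      · exact continuous_const
    · apply continuous_finset_sum
      intro x _
      split_ifs
      · exact hcw x
      · exact continuous_const
  map_zero_left p := by
    apply Subtype.ext
    show hfun φ ψ (1 - ((0 : ↑unitInterval) : ℝ)) p.1 = _
    rw [show (1 - ((0 : ↑unitInterval) : ℝ)) = 1 by simp]
    exact hfun_one φ ψ p.2.1 p.2.2.1
  map_one_left p := by
    apply Subtype.ext
    show hfun φ ψ (1 - ((1 : ↑unitInterval) : ℝ)) p.1 = _
    rw [show (1 - ((1 : ↑unitInterval) : ℝ)) = 0 by simp]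
    exact hfun_zero φ ψ p.2.1

end Homotopy

/-- A Galois connection (adjunction) between two finite posets `P` and `Q`, given by a
pair of order-preserving maps `f : P → Q` and `g : Q → P` with `f x ≤ y ↔ x ≤ g y`,
induces a homotopy equivalence between their order complexes `Δ(P)` and `Δ(Q)`. -/
theorem galoisConnection_homotopyEquiv_orderComplex
    (P Q : Type) [PartialOrder P] [Fintype P] [PartialOrder Q] [Fintype Q]
    (f : P → Q) (g : Q → P) (hf : Monotone f) (hg : Monotone g)
    (h : GaloisConnection f g) :
    Nonempty (ContinuousMap.HomotopyEquiv (OC P) (OC Q)) := by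
  refine ⟨⟨OCmap f hf, OCmap g hg, ?_, ?_⟩⟩
  · rw [OCmap_comp f g hf hg, ← OCmap_id]
    exact ContinuousMap.Homotopic.symm
      ⟨OChomotopy monotone_id (hg.comp hf) fun x => h.le_u_l x⟩
  · rw [OCmap_comp g f hg hf, ← OCmap_id]
    exact ⟨OChomotopy (hf.comp hg) monotone_id fun y => h.l_u_le y⟩
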